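/- Let n ≥ 1 and suppose ξ ∈ ℝⁿ with |ξ| ≤ 1/2. Then there exists a constant C > 0 such that for all t ≥ 0, |∇_ξ(e^{-t|ξ|²} - e^{-t}|ξ|²)| ≤ C e^{-(1+t)|ξ|²} (1+t)|ξ|. -/

import Mathlib

open Real MeasureTheory

lemma stmt4_aux (s t : ℝ) (hs0 : 0 ≤ s) (hs4 : s ≤ 1 / 4) (ht : 0 ≤ t) :
    t * Real.exp (-t * s) + Real.exp (-t)
      ≤ 2 * Real.exp 1 * Real.exp (-(1 + t) * s) * (1 + t) := by
  have h1 : t * Real.exp (-t * s) ≤ Real.exp 1 * Real.exp (-(1 + t) * s) * (1 + t) := by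
    have key : Real.exp 1 * Real.exp (-(1 + t) * s) = Real.exp (-t * s) * Real.exp (1 - s) := by
      rw [← Real.exp_add, ← Real.exp_add]; ring_nf
    have h1s : (1 : ℝ) ≤ Real.exp (1 - s) := Real.one_le_exp (by linarith)
    have e1 : (0:ℝ) < Real.exp (-t * s) := Real.exp_pos _
    calc t * Real.exp (-t * s) ≤ (1 + t) * Real.exp (-t * s) := by nlinarith
      _ = Real.exp (-t * s) * (1 + t) * 1 := by ring
      _ ≤ Real.exp (-t * s) * (1 + t) * Real.exp (1 - s) :=
          mul_le_mul_of_nonneg_left h1s (by positivity)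
      _ = Real.exp (-t * s) * Real.exp (1 - s) * (1 + t) := by ring
      _ = Real.exp 1 * Real.exp (-(1 + t) * s) * (1 + t) := by rw [key]
  have h2 : Real.exp (-t) ≤ Real.exp 1 * Real.exp (-(1 + t) * s) * (1 + t) := by
    have ha : Real.exp (-(1 + t) / 4) ≤ Real.exp (-(1 + t) * s) :=
      Real.exp_le_exp.2 (by nlinarith)
    have hb : Real.exp (-t) ≤ Real.exp 1 * Real.exp (-(1 + t) / 4) := by
      rw [← Real.exp_add]
      exact Real.exp_le_exp.2 (by linarith)
    have he1 : (0:ℝ) < Real.exp 1 := Real.exp_pos _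
    calc Real.exp (-t) ≤ Real.exp 1 * Real.exp (-(1 + t) / 4) := hb
      _ ≤ Real.exp 1 * Real.exp (-(1 + t) * s) := by
          exact mul_le_mul_of_nonneg_left ha he1.le
      _ = Real.exp 1 * Real.exp (-(1 + t) * s) * 1 := by ring
      _ ≤ Real.exp 1 * Real.exp (-(1 + t) * s) * (1 + t) :=
          mul_le_mul_of_nonneg_left (by linarith) (by positivity)
  nlinarith [Real.exp_pos 1, Real.exp_pos (-(1 + t) * s)]

theorem stmt4 (n : ℕ) (hn : 1 ≤ n) :
    ∃ C > 0, ∀ ξ : EuclideanSpace ℝ (Fin n), ‖ξ‖ ≤ 1 / 2 → ∀ t : ℝ, 0 ≤ t →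
      ‖fderiv ℝ (fun η : EuclideanSpace ℝ (Fin n) =>
          Real.exp (-t * ‖η‖ ^ 2) - Real.exp (-t) * ‖η‖ ^ 2) ξ‖
        ≤ C * Real.exp (-(1 + t) * ‖ξ‖ ^ 2) * (1 + t) * ‖ξ‖ := by
  refine ⟨4 * Real.exp 1, by positivity, fun ξ hξ t ht => ?_⟩
  set D : EuclideanSpace ℝ (Fin n) →L[ℝ] ℝ := 2 • (innerSL ℝ ξ) with hDdef
  have hD : HasFDerivAt (fun η : EuclideanSpace ℝ (Fin n) => ‖η‖ ^ 2) D ξ :=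
    (hasStrictFDerivAt_norm_sq ξ).hasFDerivAt
  have hf : HasFDerivAt (fun η : EuclideanSpace ℝ (Fin n) =>
      Real.exp (-t * ‖η‖ ^ 2) - Real.exp (-t) * ‖η‖ ^ 2)
      ((Real.exp (-t * ‖ξ‖ ^ 2) • ((-t) • D)) - Real.exp (-t) • D) ξ :=
    ((hD.const_mul (-t)).exp).sub (hD.const_mul (Real.exp (-t)))
  rw [hf.fderiv]
  have hkey : (Real.exp (-t * ‖ξ‖ ^ 2) • ((-t) • D)) - Real.exp (-t) • D
      = (Real.exp (-t * ‖ξ‖ ^ 2) * (-t) - Real.exp (-t)) • D := by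
    rw [smul_smul]; exact (sub_smul _ _ _).symm
  rw [hkey, norm_smul]
  have hDnorm : ‖D‖ ≤ 2 * ‖ξ‖ := by
    rw [hDdef, two_smul]
    calc ‖innerSL ℝ ξ + innerSL ℝ ξ‖ ≤ ‖innerSL ℝ ξ‖ + ‖innerSL ℝ ξ‖ := norm_add_le _ _
      _ = 2 * ‖ξ‖ := by rw [innerSL_apply_norm]; ring
  rw [Real.norm_eq_abs]
  have hs0 : (0:ℝ) ≤ ‖ξ‖ ^ 2 := sq_nonneg _
  have hs4 : ‖ξ‖ ^ 2 ≤ 1 / 4 := by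
    nlinarith [norm_nonneg ξ]
  have habs : |Real.exp (-t * ‖ξ‖ ^ 2) * (-t) - Real.exp (-t)|
      ≤ t * Real.exp (-t * ‖ξ‖ ^ 2) + Real.exp (-t) := by
    rw [abs_sub_comm]
    calc |Real.exp (-t) - Real.exp (-t * ‖ξ‖ ^ 2) * (-t)|
        ≤ |Real.exp (-t)| + |Real.exp (-t * ‖ξ‖ ^ 2) * (-t)| := abs_sub _ _
      _ = Real.exp (-t) + Real.exp (-t * ‖ξ‖ ^ 2) * t := by
          rw [abs_of_nonneg (Real.exp_pos _).le, abs_mul,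
            abs_of_nonneg (Real.exp_pos _).le, abs_neg, abs_of_nonneg ht]
      _ = t * Real.exp (-t * ‖ξ‖ ^ 2) + Real.exp (-t) := by ring
  have hmain := stmt4_aux (‖ξ‖ ^ 2) t hs0 hs4 ht
  calc |Real.exp (-t * ‖ξ‖ ^ 2) * (-t) - Real.exp (-t)| * ‖D‖
      ≤ (2 * Real.exp 1 * Real.exp (-(1 + t) * ‖ξ‖ ^ 2) * (1 + t)) * (2 * ‖ξ‖) := by
        apply mul_le_mul (le_trans habs hmain) hDnorm (norm_nonneg _)
        positivity
    _ = 4 * Real.exp 1 * Real.exp (-(1 + t) * ‖ξ‖ ^ 2) * (1 + t) * ‖ξ‖ := by ring
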